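/- arXiv:1207.1460 — 2 statements merged into one kernel-verified Lean document; each statement's English description precedes it below -/
import Mathlib

section
/- Let α ≥ 1, β ≥ 1 and m ≥ 1 be integers, let n ≥ 1, let S_n have the Pólya–Eggenberger urn mass function p(k) = C(n,k) (α/m)_k (β/m)_{n−k} / (α/m + β/m)_n on {0,1,…,n}, set W_n = S_n/n, and let Z have the Beta distribution B(α/m, β/m). Then with h(x) = x(1−x) for x ∈ [0,1] and h(x) = 0 otherwise (a 1-Lipschitz function), |E h(W_n) − E h(Z)| = (1/n) · αβ/((α+β+m)(α+β)); consequently d_W(W_n, Z) ≥ αβ/( n(α+β+m)(α+β) ), so the O(1/n) rate of the Wasserstein approximation cannot be improved. -/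
open MeasureTheory

/-- The rising factorial `(x)_k = x (x+1) ⋯ (x+k-1)`, with `(x)_0 = 1`. -/
noncomputable def risingFac (x : ℝ) : ℕ → ℝ
  | 0 => 1
  | k + 1 => risingFac x k * (x + k)

/-- The Pólya–Eggenberger urn mass function
`p n k = C(n,k) (α/m)_k (β/m)_{n-k} / (α/m + β/m)_n` on `{0,1,…,n}`. -/
noncomputable def urnPmf (α β m n k : ℕ) : ℝ :=
  (n.choose k : ℝ) * risingFac ((α : ℝ) / m) k * risingFac ((β : ℝ) / m) (n - k)
    / risingFac ((α : ℝ) / m + (β : ℝ) / m) n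

/-- Expectation `E h(Z)` for `Z ∼ B(a,b)`, the Beta distribution with density
`x^{a-1} (1-x)^{b-1} / B(a,b)` on `[0,1]`, where `B(a,b) = Γ(a)Γ(b)/Γ(a+b)`. -/
noncomputable def betaExp (a b : ℝ) (h : ℝ → ℝ) : ℝ :=
  ∫ x in Set.Ioo (0 : ℝ) 1,
    (Real.Gamma (a + b) / (Real.Gamma a * Real.Gamma b))
      * x ^ (a - 1) * (1 - x) ^ (b - 1) * h x

lemma risingFac_succ (x : ℝ) (k : ℕ) : risingFac x (k+1) = risingFac x k * (x + k) := rfl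

lemma risingFac_succ_left (x : ℝ) (k : ℕ) :
    risingFac x (k+1) = x * risingFac (x+1) k := by
  induction k with
  | zero => simp [risingFac]
  | succ k ih =>
      rw [risingFac_succ, ih, risingFac_succ]
      push_cast
      ring

lemma risingFac_pos {x : ℝ} (hx : 0 < x) (k : ℕ) : 0 < risingFac x k := by
  induction k with
  | zero => norm_num [risingFac]
  | succ k ih => exact mul_pos ih (by positivity)

lemma vandermonde (n : ℕ) (a b : ℝ) :
    ∑ k ∈ Finset.range (n+1),
      (n.choose k : ℝ) * risingFac a k * risingFac b (n-k) = risingFac (a+b) n := by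
  induction n with
  | zero => simp [risingFac]
  | succ n ih =>
      rw [Finset.sum_range_succ' _ (n+1)]
      have hsplit : ∀ k ∈ Finset.range (n+1),
          ((n+1).choose (k+1) : ℝ) * risingFac a (k+1) * risingFac b (n+1-(k+1))
          = (n.choose k : ℝ) * risingFac a k * risingFac b (n-k) * (a + k)
            + (n.choose (k+1) : ℝ) * risingFac a (k+1) * risingFac b (n-(k+1)) * (b + (n-(k+1) : ℕ)) := by
        intro k hk
        rw [Finset.mem_range] at hk
        have hk' : k ≤ n := Nat.lt_succ_iff.mp hk
        rw [Nat.choose_succ_succ, Nat.succ_sub_succ]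
        by_cases hkn : k = n
        · subst hkn
          simp [risingFac_succ]
          ring
        · have hk2 : k + 1 ≤ n := by omega
          have h1 : n - k = (n - (k+1)) + 1 := by omega
          rw [h1, risingFac_succ, risingFac_succ]
          push_cast [Nat.cast_sub hk2]
          ring
      rw [Finset.sum_congr rfl hsplit, Finset.sum_add_distrib]
      have hrhs : risingFac (a+b) (n+1)
          = (∑ k ∈ Finset.range (n+1),
              (n.choose k : ℝ) * risingFac a k * risingFac b (n-k) * (a + k))
            + ∑ k ∈ Finset.range (n+1),
              (n.choose k : ℝ) * risingFac a k * risingFac b ((n-k)+1) := by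
        rw [risingFac_succ, ← ih, Finset.sum_mul, ← Finset.sum_add_distrib]
        refine Finset.sum_congr rfl fun k hk => ?_
        rw [Finset.mem_range, Nat.lt_succ_iff] at hk
        rw [risingFac_succ]
        push_cast [Nat.cast_sub hk]
        ring
      have hsec : ∑ k ∈ Finset.range (n+1),
            (n.choose k : ℝ) * risingFac a k * risingFac b ((n-k)+1)
          = (∑ k ∈ Finset.range (n+1),
              (n.choose (k+1) : ℝ) * risingFac a (k+1) * risingFac b (n-(k+1))
                * (b + ((n-(k+1) : ℕ) : ℝ)))
            + risingFac b (n+1) := by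
        rw [Finset.sum_range_succ' _ n, Finset.sum_range_succ
          (fun k => (n.choose (k+1) : ℝ) * risingFac a (k+1) * risingFac b (n-(k+1))
                * (b + ((n-(k+1) : ℕ) : ℝ)))]
        simp only [Nat.choose_succ_self, Nat.cast_zero, Nat.choose_zero_right, Nat.cast_one,
          risingFac, Nat.sub_zero, zero_mul, mul_zero, add_zero]
        congr 1
        · refine Finset.sum_congr rfl fun k hk => ?_
          rw [Finset.mem_range] at hk
          ring
        · norm_num
      rw [hrhs, hsec]
      simp only [Nat.choose_zero_right, Nat.cast_one, Nat.sub_zero, one_mul, risingFac]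
      ring

lemma choose_aux (N j : ℕ) (hj : j ≤ N) :
    ((j+1) * ((N+1-j) * (N+2).choose (j+1)) : ℝ) = ((N+2) * ((N+1) * N.choose j) : ℕ) := by
  have h1 : (N+2) * (N+1).choose j = (N+2).choose (j+1) * (j+1) :=
    Nat.add_one_mul_choose_eq (N+1) j
  have h2 : (N+1) * N.choose (N-j) = (N+1).choose (N-j+1) * (N-j+1) :=
    Nat.add_one_mul_choose_eq N (N-j)
  have hs1 : (N+1).choose (N+1-j) = (N+1).choose j := Nat.choose_symm (by omega)
  have hs2 : N.choose (N-j) = N.choose j := Nat.choose_symm hj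
  have he : N+1-j = (N-j)+1 := by omega
  rw [hs2, ← he, hs1] at h2
  have c1 := congrArg (Nat.cast (R := ℝ)) h1
  have c2 := congrArg (Nat.cast (R := ℝ)) h2
  push_cast [Nat.cast_sub hj, Nat.cast_sub (hj.trans (Nat.le_succ N))] at c1 c2 ⊢
  linear_combination (-((N:ℝ)+1-j)) * c1 - ((N:ℝ)+2) * c2

lemma keysum (N : ℕ) (a b : ℝ) :
    ∑ k ∈ Finset.range (N+3),
        (k : ℝ) * (((N+2) - k : ℕ) : ℝ) * ((N+2).choose k : ℝ)
          * risingFac a k * risingFac b (N+2-k)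
      = (N+2) * (N+1) * a * b * risingFac (a+b+2) N := by
  rw [Finset.sum_range_succ' _ (N+2), Finset.sum_range_succ]
  simp only [Nat.cast_zero, zero_mul, mul_zero, add_zero, Nat.sub_self]
  have hterm : ∀ j ∈ Finset.range (N+1),
      ((j+1 : ℕ) : ℝ) * (((N+2) - (j+1) : ℕ) : ℝ) * ((N+2).choose (j+1) : ℝ)
          * risingFac a (j+1) * risingFac b (N+2-(j+1))
      = (N+2) * (N+1) * a * b
          * ((N.choose j : ℝ) * risingFac (a+1) j * risingFac (b+1) (N-j)) := by
    intro j hj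
    rw [Finset.mem_range, Nat.lt_succ_iff] at hj
    have h1 : N+2-(j+1) = (N-j)+1 := by omega
    rw [h1, risingFac_succ_left, risingFac_succ_left]
    have hc := choose_aux N j hj
    push_cast [Nat.cast_sub hj] at hc ⊢
    linear_combination (a * risingFac (a+1) j * b * risingFac (b+1) (N-j)) * hc
  rw [Finset.sum_congr rfl hterm, ← Finset.mul_sum, vandermonde N (a+1) (b+1)]
  ring_nf

lemma Ehsum (a b : ℝ) (ha : 0 < a) (hb : 0 < b) (n : ℕ) (hn : 1 ≤ n) :
    ∑ k ∈ Finset.range (n+1),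
        ((n.choose k : ℝ) * risingFac a k * risingFac b (n-k) / risingFac (a+b) n)
          * ((k:ℝ)/n * (1 - (k:ℝ)/n))
      = ((n:ℝ)-1) * a * b / ((n:ℝ) * ((a+b) * (a+b+1))) := by
  have hR : 0 < risingFac (a+b) n := risingFac_pos (by linarith) n
  match n, hn with
  | 1, _ =>
      norm_num [Finset.sum_range_succ, risingFac]
  | (N+2), _ =>
      set n := N + 2 with hn2
      have hnR : (0:ℝ) < n := by positivity
      have hterm : ∀ k ∈ Finset.range (n+1),
          ((n.choose k : ℝ) * risingFac a k * risingFac b (n-k) / risingFac (a+b) n)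
            * ((k:ℝ)/n * (1 - (k:ℝ)/n))
          = ((k : ℝ) * ((n - k : ℕ) : ℝ) * ((n).choose k : ℝ)
              * risingFac a k * risingFac b (n-k))
            / (risingFac (a+b) n * ((n:ℝ) * (n:ℝ))) := by
        intro k hk
        rw [Finset.mem_range, Nat.lt_succ_iff] at hk
        rw [Nat.cast_sub hk]
        field_simp
      rw [Finset.sum_congr rfl hterm, ← Finset.sum_div, keysum N a b]
      have hfac : risingFac (a+b) n = (a+b) * ((a+b+1) * risingFac (a+b+2) N) := by
        rw [hn2, risingFac_succ_left, risingFac_succ_left]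
        ring_nf
      have hP : 0 < risingFac (a+b+2) N := risingFac_pos (by linarith) N
      rw [hfac]
      have hab : (0:ℝ) < a + b := by linarith
      have hab1 : (0:ℝ) < a + b + 1 := by linarith
      field_simp
      push_cast [hn2]
      ring

lemma realBeta (u v : ℝ) (hu : 0 < u) (hv : 0 < v) :
    ∫ x in Set.Ioo (0:ℝ) 1, x ^ (u-1) * (1-x) ^ (v-1)
      = Real.Gamma u * Real.Gamma v / Real.Gamma (u+v) := by
  have hI : Complex.betaIntegral u v
      = ((∫ x in (0:ℝ)..1, x ^ (u-1) * (1-x) ^ (v-1) : ℝ) : ℂ) := by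
    rw [Complex.betaIntegral, ← intervalIntegral.integral_ofReal]
    refine intervalIntegral.integral_congr fun x hx => ?_
    rw [Set.uIcc_of_le zero_le_one, Set.mem_Icc] at hx
    push_cast
    rw [Complex.ofReal_cpow hx.1, Complex.ofReal_cpow (by linarith [hx.2])]
    push_cast
    ring
  have hG := Complex.Gamma_mul_Gamma_eq_betaIntegral
    (s := (u:ℂ)) (t := (v:ℂ)) (by simpa using hu) (by simpa using hv)
  rw [hI] at hG
  have huv : ((u:ℂ) + v) = ((u + v : ℝ) : ℂ) := by push_cast; ring
  rw [huv, Complex.Gamma_ofReal, Complex.Gamma_ofReal, Complex.Gamma_ofReal] at hG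
  have hG' : Real.Gamma u * Real.Gamma v
      = Real.Gamma (u+v) * ∫ x in (0:ℝ)..1, x ^ (u-1) * (1-x) ^ (v-1) := by
    exact_mod_cast hG
  have hpos : 0 < Real.Gamma (u+v) := Real.Gamma_pos_of_pos (by linarith)
  rw [intervalIntegral.integral_of_le zero_le_one, integral_Ioc_eq_integral_Ioo] at hG'
  rw [eq_div_iff hpos.ne']
  linarith [hG']

lemma betaExp_val (a b : ℝ) (ha : 0 < a) (hb : 0 < b) (h : ℝ → ℝ)
    (hdef : ∀ x : ℝ, h x = if x ∈ Set.Icc (0 : ℝ) 1 then x * (1 - x) else 0) :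
    betaExp a b h = a * b / ((a + b) * (a + b + 1)) := by
  rw [betaExp]
  have heq : Set.EqOn
      (fun x : ℝ => (Real.Gamma (a + b) / (Real.Gamma a * Real.Gamma b))
        * x ^ (a - 1) * (1 - x) ^ (b - 1) * h x)
      (fun x : ℝ => (Real.Gamma (a + b) / (Real.Gamma a * Real.Gamma b))
        * (x ^ ((a+1) - 1) * (1 - x) ^ ((b+1) - 1)))
      (Set.Ioo (0:ℝ) 1) := by
    intro x hx
    obtain ⟨hx0, hx1⟩ := hx
    have hx1' : (0:ℝ) < 1 - x := by linarith
    have hh : h x = x * (1 - x) := by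
      rw [hdef x, if_pos ⟨hx0.le, hx1.le⟩]
    have e1 : x ^ ((a+1) - 1) = x ^ (a - 1) * x := by
      rw [show (a+1) - 1 = (a-1) + 1 by ring, Real.rpow_add_one hx0.ne']
    have e2 : (1-x) ^ ((b+1) - 1) = (1-x) ^ (b - 1) * (1-x) := by
      rw [show (b+1) - 1 = (b-1) + 1 by ring, Real.rpow_add_one hx1'.ne']
    simp only [hh, e1, e2]
    ring
  rw [setIntegral_congr_fun measurableSet_Ioo heq, MeasureTheory.integral_const_mul,
    realBeta (a+1) (b+1) (by linarith) (by linarith)]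
  have g1 : Real.Gamma (a+1) = a * Real.Gamma a := Real.Gamma_add_one ha.ne'
  have g2 : Real.Gamma (b+1) = b * Real.Gamma b := Real.Gamma_add_one hb.ne'
  have g3 : Real.Gamma ((a+1) + (b+1)) = (a+b+1) * ((a+b) * Real.Gamma (a+b)) := by
    rw [show (a+1) + (b+1) = (a+b+1) + 1 by ring,
      Real.Gamma_add_one (by positivity : (a+b+1) ≠ 0),
      show a+b+1 = (a+b) + 1 by ring,
      Real.Gamma_add_one (by positivity : (a+b) ≠ 0)]
  rw [g1, g2, g3]
  have pA := Real.Gamma_pos_of_pos ha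
  have pB := Real.Gamma_pos_of_pos hb
  have pAB := Real.Gamma_pos_of_pos (show (0:ℝ) < a + b by linarith)
  have h1 : (0:ℝ) < a + b := by linarith
  have h2 : (0:ℝ) < a + b + 1 := by linarith
  field_simp

lemma lip_h (h : ℝ → ℝ)
    (hdef : ∀ x : ℝ, h x = if x ∈ Set.Icc (0 : ℝ) 1 then x * (1 - x) else 0) :
    LipschitzWith 1 h := by
  apply LipschitzWith.of_dist_le_mul
  intro x y
  rw [Real.dist_eq, Real.dist_eq, NNReal.coe_one, one_mul, hdef x, hdef y]
  simp only [Set.mem_Icc]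
  by_cases hx : 0 ≤ x ∧ x ≤ 1 <;> by_cases hy : 0 ≤ y ∧ y ≤ 1
  · rw [if_pos hx, if_pos hy]
    rcases abs_cases (x-y) with ⟨he, h0⟩ | ⟨he, h0⟩ <;>
      rw [he, abs_le] <;> constructor <;>
      nlinarith [hx.1, hx.2, hy.1, hy.2, mul_nonneg (sub_nonneg.mpr hx.2) hy.1,
        mul_nonneg (sub_nonneg.mpr hy.2) hx.1]
  · rw [if_pos hx, if_neg hy]
    push_neg at hy
    rcases le_or_gt 0 y with h1 | h1
    · have h2 := hy h1
      rcases abs_cases (x-y) with ⟨he, h0⟩ | ⟨he, h0⟩ <;>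
        rw [he, abs_le] <;> constructor <;>
        nlinarith [hx.1, hx.2, mul_nonneg hx.1 (sub_nonneg.mpr hx.2)]
    · rcases abs_cases (x-y) with ⟨he, h0⟩ | ⟨he, h0⟩ <;>
        rw [he, abs_le] <;> constructor <;>
        nlinarith [hx.1, hx.2, mul_nonneg hx.1 (sub_nonneg.mpr hx.2)]
  · rw [if_neg hx, if_pos hy]
    push_neg at hx
    rcases le_or_gt 0 x with h1 | h1
    · have h2 := hx h1
      rcases abs_cases (x-y) with ⟨he, h0⟩ | ⟨he, h0⟩ <;>
        rw [he, abs_le] <;> constructor <;>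
        nlinarith [hy.1, hy.2, mul_nonneg hy.1 (sub_nonneg.mpr hy.2)]
    · rcases abs_cases (x-y) with ⟨he, h0⟩ | ⟨he, h0⟩ <;>
        rw [he, abs_le] <;> constructor <;>
        nlinarith [hy.1, hy.2, mul_nonneg hy.1 (sub_nonneg.mpr hy.2)]
  · rw [if_neg hx, if_neg hy]
    simpa using abs_nonneg (x - y)

/-- With `S_n` the number of white balls drawn from the
Pólya–Eggenberger urn, `W_n = S_n/n`, `Z ∼ B(α/m, β/m)`, and
`h(x) = x(1-x)` on `[0,1]`, `h = 0` otherwise: `h` is `1`-Lipschitz,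
`|E h(W_n) - E h(Z)| = (1/n) αβ/((α+β+m)(α+β))`, and consequently
`d_W(W_n, Z) ≥ αβ/(n(α+β+m)(α+β))` (there is a `1`-Lipschitz test function
attaining at least this value), so the `O(1/n)` rate cannot be improved. -/
theorem stmt_11 (α β m : ℕ) (hα : 1 ≤ α) (hβ : 1 ≤ β) (hm : 1 ≤ m)
    (n : ℕ) (hn : 1 ≤ n)
    (h : ℝ → ℝ)
    (hdef : ∀ x : ℝ, h x = if x ∈ Set.Icc (0 : ℝ) 1 then x * (1 - x) else 0) :
    LipschitzWith 1 h ∧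
    |∑ k ∈ Finset.range (n + 1), urnPmf α β m n k * h ((k : ℝ) / n)
        - betaExp ((α : ℝ) / m) ((β : ℝ) / m) h|
      = (1 / (n : ℝ)) * ((α : ℝ) * β / (((α : ℝ) + β + m) * ((α : ℝ) + β))) ∧
    (∃ h₀ : ℝ → ℝ, LipschitzWith 1 h₀ ∧
      (α : ℝ) * β / ((n : ℝ) * ((α : ℝ) + β + m) * ((α : ℝ) + β))
        ≤ |∑ k ∈ Finset.range (n + 1), urnPmf α β m n k * h₀ ((k : ℝ) / n)
            - betaExp ((α : ℝ) / m) ((β : ℝ) / m) h₀|) := by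
  have hm0 : (0:ℝ) < m := by exact_mod_cast hm
  have hα0 : (0:ℝ) < α := by exact_mod_cast hα
  have hβ0 : (0:ℝ) < β := by exact_mod_cast hβ
  have hn0 : (0:ℝ) < n := by exact_mod_cast hn
  set a : ℝ := (α : ℝ) / m with ha_def
  set b : ℝ := (β : ℝ) / m with hb_def
  have ha : 0 < a := by rw [ha_def]; positivity
  have hb : 0 < b := by rw [hb_def]; positivity
  have hsum : ∑ k ∈ Finset.range (n + 1), urnPmf α β m n k * h ((k : ℝ) / n)
      = ((n:ℝ)-1) * a * b / ((n:ℝ) * ((a+b) * (a+b+1))) := by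
    rw [← Ehsum a b ha hb n hn]
    refine Finset.sum_congr rfl fun k hk => ?_
    rw [Finset.mem_range, Nat.lt_succ_iff] at hk
    have hmem : (k : ℝ) / n ∈ Set.Icc (0:ℝ) 1 := by
      constructor
      · positivity
      · rw [div_le_one hn0]
        exact_mod_cast hk
    rw [urnPmf, hdef, if_pos hmem]
  have hbeta : betaExp a b h = a * b / ((a+b) * (a+b+1)) := betaExp_val a b ha hb h hdef
  have key : ((n:ℝ)-1) * a * b / ((n:ℝ) * ((a+b) * (a+b+1))) - a * b / ((a+b) * (a+b+1))
      = -((1 / (n : ℝ)) * ((α : ℝ) * β / (((α : ℝ) + β + m) * ((α : ℝ) + β)))) := by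
    rw [ha_def, hb_def]
    have d1 : ((α:ℝ) + β) ≠ 0 := by positivity
    have d2 : ((α:ℝ) + β + m) ≠ 0 := by positivity
    have d3 : ((α:ℝ)/m + β/m) ≠ 0 := by positivity
    have d4 : ((α:ℝ)/m + β/m + 1) ≠ 0 := by positivity
    field_simp
    ring
  have h2 : |∑ k ∈ Finset.range (n + 1), urnPmf α β m n k * h ((k : ℝ) / n)
        - betaExp a b h|
      = (1 / (n : ℝ)) * ((α : ℝ) * β / (((α : ℝ) + β + m) * ((α : ℝ) + β))) := by
    rw [hsum, hbeta, key, abs_neg, abs_of_nonneg (by positivity)]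
  refine ⟨lip_h h hdef, h2, h, lip_h h hdef, ?_⟩
  rw [h2]
  apply le_of_eq
  have d1 : ((α:ℝ) + β) ≠ 0 := by positivity
  have d2 : ((α:ℝ) + β + m) ≠ 0 := by positivity
  field_simp
end

section
/- Let n ≥ 1 and let K be a random variable on {0,1,…,n} with P(K = k) = u_{2k} u_{2n−2k}, where u_{2m} = 2^{−2m} C(2m, m), and set W = K/n. Then E[W] = 1/2 and E[W²] = 3/8 + 1/(8n). Consequently, if Z has the Arcsine distribution B(1/2,1/2), so that E[Z²] = 3/8, then for the 1-Lipschitz function h(w) = w²/2 on [0,1] one has E h(W) − E h(Z) = 1/(16n), and hence d_W(W, Z) ≥ 1/(16n); the O(1/n) rate of the Arcsine approximation cannot be improved. -/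
open MeasureTheory

/-- `u_{2m} = 2^{-2m} C(2m, m)`, the probability that a simple symmetric
random walk returns to zero at time `2m`. -/
noncomputable def u (m : ℕ) : ℝ := ((2 * m).choose m : ℝ) / 4 ^ m

/-- The mass function of `K = L_{2n}/2`, where `L_{2n}` is the last return
time to zero of a simple symmetric random walk of length `2n`:
`P(K = k) = u_{2k} u_{2n-2k}` for `k = 0, 1, …, n`. -/
noncomputable def arcPmf (n k : ℕ) : ℝ := u k * u (n - k)

/- ### Auxiliary combinatorial lemmas -/

lemma u_pos (m : ℕ) : 0 < u m := by
  have h : 0 < (2 * m).choose m := Nat.choose_pos (by omega)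
  have h' : (0:ℝ) < ((2 * m).choose m : ℝ) := by exact_mod_cast h
  unfold u; positivity

lemma u_succ (k : ℕ) : (2 * (k + 1) : ℝ) * u (k + 1) = (2 * k + 1) * u k := by
  have h := Nat.succ_mul_centralBinom_succ k
  have h' : ((k : ℝ) + 1) * ((2 * (k+1)).choose (k+1) : ℝ)
      = 2 * (2 * k + 1) * ((2 * k).choose k : ℝ) := by
    have := congrArg (Nat.cast : ℕ → ℝ) h
    push_cast [Nat.centralBinom] at this
    linarith
  simp only [u]
  have h4 : (4:ℝ) ^ (k+1) ≠ 0 := by positivity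
  field_simp
  calc 2 * ((k:ℝ) + 1) * ((2 * (k+1)).choose (k+1) : ℝ) * 4 ^ k
      = (((k:ℝ) + 1) * ((2 * (k+1)).choose (k+1) : ℝ)) * (2 * 4 ^ k) := by ring
    _ = (2 * (2 * (k:ℝ) + 1) * ((2 * k).choose k : ℝ)) * (2 * 4 ^ k) := by rw [h']
    _ = (2 * (k:ℝ) + 1) * ((2 * k).choose k : ℝ) * 4 ^ (k+1) := by rw [pow_succ]; ring
  ring

noncomputable def S0 (n : ℕ) : ℝ := ∑ k ∈ Finset.range (n+1), u k * u (n-k)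
noncomputable def S1 (n : ℕ) : ℝ := ∑ k ∈ Finset.range (n+1), (k:ℝ) * (u k * u (n-k))
noncomputable def S2 (n : ℕ) : ℝ := ∑ k ∈ Finset.range (n+1), (k:ℝ)^2 * (u k * u (n-k))

lemma two_S1 (n : ℕ) : 2 * S1 n = n * S0 n := by
  have hrefl := Finset.sum_range_reflect (fun k : ℕ => (k:ℝ) * (u k * u (n-k))) (n+1)
  simp only [Nat.add_sub_cancel] at hrefl
  have h1 : S1 n = ∑ j ∈ Finset.range (n+1), ((n:ℝ)- j) * (u j * u (n-j)) := by
    rw [S1, ← hrefl]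
    refine Finset.sum_congr rfl fun j hj => ?_
    have hj' : j ≤ n := by simpa [Nat.lt_succ_iff] using hj
    have h2 : n - (n - j) = j := by omega
    have h3 : ((n - j : ℕ) : ℝ) = (n:ℝ) - j := by
      have := Nat.cast_sub hj' (R := ℝ); linarith
    rw [h2, h3]; ring
  have : 2 * S1 n = S1 n + S1 n := by ring
  rw [this]
  nth_rewrite 2 [h1]
  rw [S1, S0, ← Finset.sum_add_distrib, Finset.mul_sum]
  exact Finset.sum_congr rfl fun j hj => by ring

lemma S1_succ (n : ℕ) : S1 (n+1) = S1 n + S0 n / 2 := by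
  rw [S1, Finset.sum_range_succ']
  simp only [Nat.cast_zero, zero_mul, add_zero, Nat.cast_add, Nat.cast_one]
  have : ∀ j ∈ Finset.range (n+1), ((j:ℝ) + 1) * (u (j+1) * u (n + 1 - (j+1)))
      = ((j:ℝ) + 1/2) * (u j * u (n-j)) := by
    intro j hj
    have h2 : n + 1 - (j+1) = n - j := by omega
    have h3 := u_succ j
    rw [h2]
    have : ((j:ℝ) + 1) * u (j+1) = ((j:ℝ) + 1/2) * u j := by push_cast at h3 ⊢; linarith
    calc ((j:ℝ) + 1) * (u (j+1) * u (n-j)) = (((j:ℝ) + 1) * u (j+1)) * u (n-j) := by ring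
      _ = (((j:ℝ) + 1/2) * u j) * u (n-j) := by rw [this]
      _ = ((j:ℝ) + 1/2) * (u j * u (n-j)) := by ring
  rw [Finset.sum_congr rfl this]
  simp only [add_mul]
  rw [Finset.sum_add_distrib, ← Finset.mul_sum, S1, S0]
  ring

lemma S2_succ (n : ℕ) : S2 (n+1) = S2 n + 3/2 * S1 n + S0 n / 2 := by
  rw [S2, Finset.sum_range_succ']
  simp only [Nat.cast_zero, add_zero, Nat.cast_add, Nat.cast_one]
  have : ∀ j ∈ Finset.range (n+1), ((j:ℝ) + 1)^2 * (u (j+1) * u (n + 1 - (j+1)))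
      = ((j:ℝ)^2 + 3/2 * j + 1/2) * (u j * u (n-j)) := by
    intro j hj
    have h2 : n + 1 - (j+1) = n - j := by omega
    have h3 := u_succ j
    rw [h2]
    have h4 : ((j:ℝ) + 1) * u (j+1) = ((j:ℝ) + 1/2) * u j := by push_cast at h3 ⊢; linarith
    calc ((j:ℝ) + 1)^2 * (u (j+1) * u (n-j))
        = (((j:ℝ) + 1) * u (j+1)) * (((j:ℝ)+1) * u (n-j)) := by ring
      _ = (((j:ℝ) + 1/2) * u j) * (((j:ℝ)+1) * u (n-j)) := by rw [h4]
      _ = ((j:ℝ)^2 + 3/2 * j + 1/2) * (u j * u (n-j)) := by ring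
  rw [Finset.sum_congr rfl this]
  simp only [add_mul, mul_assoc]
  rw [Finset.sum_add_distrib, Finset.sum_add_distrib, ← Finset.mul_sum,
    ← Finset.mul_sum, S2, S1, S0]
  ring

lemma S0_eq_one (n : ℕ) : S0 n = 1 := by
  induction n with
  | zero => simp [S0, u]
  | succ n ih =>
    have h1 := two_S1 (n+1)
    have h2 := S1_succ n
    have h3 := two_S1 n
    have hne : ((n:ℝ) + 1) ≠ 0 := by positivity
    rw [ih] at h2 h3
    have h4 : ((n:ℝ) + 1) * S0 (n+1) = ((n:ℝ) + 1) * 1 := by push_cast at h1; linarith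
    exact mul_left_cancel₀ hne h4

lemma S1_eq (n : ℕ) : S1 n = n / 2 := by
  have := two_S1 n; rw [S0_eq_one] at this; linarith

lemma S2_eq (n : ℕ) : S2 n = (3 * n^2 + n) / 8 := by
  induction n with
  | zero => simp [S2]
  | succ n ih =>
    rw [S2_succ, ih, S1_eq, S0_eq_one]
    push_cast; ring

/- ### Lipschitz -/

lemma clamp_lip (x y : ℝ) : |min (max x 0) 1 - min (max y 0) 1| ≤ |x - y| := by
  calc |min (max x 0) 1 - min (max y 0) 1|
      ≤ max |max x 0 - max y 0| |(1:ℝ) - 1| := abs_min_sub_min_le_max _ _ _ _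
    _ ≤ |x - y| := by
        rw [sub_self, abs_zero]
        exact max_le (abs_max_sub_max_le_abs x y 0) (abs_nonneg _)

lemma lip_h_s19 (h : ℝ → ℝ) (hdef : ∀ x : ℝ, h x = (min (max x 0) 1) ^ 2 / 2) :
    LipschitzWith 1 h := by
  rw [lipschitzWith_iff_dist_le_mul]
  intro x y
  rw [Real.dist_eq, Real.dist_eq, hdef, hdef, NNReal.coe_one, one_mul]
  set a := min (max x 0) 1 with ha
  set b := min (max y 0) 1 with hb
  have ha0 : 0 ≤ a := le_min (le_max_right _ _) one_pos.le
  have ha1 : a ≤ 1 := min_le_right _ _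
  have hb0 : 0 ≤ b := le_min (le_max_right _ _) one_pos.le
  have hb1 : b ≤ 1 := min_le_right _ _
  have hab : |a - b| ≤ |x - y| := clamp_lip x y
  have h1 : |a ^ 2 / 2 - b ^ 2 / 2| = |a - b| * ((a + b) / 2) := by
    rw [show a ^ 2 / 2 - b ^ 2 / 2 = (a - b) * ((a + b)/2) by ring, abs_mul,
      abs_of_nonneg (by linarith : (0:ℝ) ≤ (a + b)/2)]
  rw [h1]
  calc |a - b| * ((a + b) / 2) ≤ |a - b| * 1 :=
        mul_le_mul_of_nonneg_left (by linarith) (abs_nonneg _)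
    _ ≤ |x - y| := by rw [mul_one]; exact hab

/- ### The Beta integral -/

lemma gamma_52 : Real.Gamma (5/2) = 3/4 * Real.sqrt Real.pi := by
  have h1 : Real.Gamma (5/2) = (3/2) * Real.Gamma (3/2) := by
    have := Real.Gamma_add_one (show (3/2 : ℝ) ≠ 0 by norm_num)
    norm_num at this ⊢
    linarith
  have h2 : Real.Gamma (3/2) = (1/2) * Real.Gamma (1/2) := by
    have := Real.Gamma_add_one (show (1/2 : ℝ) ≠ 0 by norm_num)
    norm_num at this ⊢
    linarith
  rw [h1, h2, Real.Gamma_one_half_eq]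
  ring

lemma gamma_3 : Real.Gamma 3 = 2 := by
  have h1 : Real.Gamma 3 = 2 * Real.Gamma 2 := by
    have := Real.Gamma_add_one (show (2 : ℝ) ≠ 0 by norm_num)
    norm_num at this ⊢
  rw [h1, Real.Gamma_two]; norm_num

lemma beta_int_eq : Complex.betaIntegral (5/2) (1/2)
    = ((∫ x in (0:ℝ)..1, x ^ ((3:ℝ)/2) * (1 - x) ^ (-(1:ℝ)/2) : ℝ) : ℂ) := by
  rw [Complex.betaIntegral, ← intervalIntegral.integral_ofReal]
  refine intervalIntegral.integral_congr fun x hx => ?_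
  rw [Set.uIcc_of_le (by norm_num : (0:ℝ) ≤ 1)] at hx
  obtain ⟨hx0, hx1⟩ := hx
  push_cast
  rw [Complex.ofReal_cpow hx0, Complex.ofReal_cpow (by linarith : (0:ℝ) ≤ 1 - x)]
  push_cast
  norm_num

lemma I_eq : ∫ x in (0:ℝ)..1, x ^ ((3:ℝ)/2) * (1 - x) ^ (-(1:ℝ)/2) = 3 * Real.pi / 8 := by
  have h := Complex.Gamma_mul_Gamma_eq_betaIntegral
    (show 0 < (5/2 : ℂ).re by norm_num) (show 0 < (1/2 : ℂ).re by norm_num)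
  rw [beta_int_eq] at h
  have h52 : ((5:ℂ)/2) = ((5/2 : ℝ) : ℂ) := by push_cast; ring
  have h12 : ((1:ℂ)/2) = ((1/2 : ℝ) : ℂ) := by push_cast; ring
  rw [h52, h12] at h
  have h3 : ((5/2:ℝ):ℂ) + ((1/2:ℝ):ℂ) = ((3 : ℝ) : ℂ) := by push_cast; norm_num
  rw [h3] at h
  rw [Complex.Gamma_ofReal, Complex.Gamma_ofReal, Complex.Gamma_ofReal] at h
  rw [gamma_52, gamma_3, Real.Gamma_one_half_eq] at h
  have h' : (3/4 * Real.sqrt Real.pi) * Real.sqrt Real.pi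
      = 2 * ∫ x in (0:ℝ)..1, x ^ ((3:ℝ)/2) * (1 - x) ^ (-(1:ℝ)/2) := by
    exact_mod_cast h
  have hpi : Real.sqrt Real.pi * Real.sqrt Real.pi = Real.pi :=
    Real.mul_self_sqrt Real.pi_pos.le
  nlinarith [h', hpi]

lemma betaExp_eq (h : ℝ → ℝ) (hdef : ∀ x : ℝ, h x = (min (max x 0) 1) ^ 2 / 2) :
    betaExp (1/2) (1/2) h = 3/16 := by
  have hcongr : ∀ x ∈ Set.Ioo (0:ℝ) 1,
      (Real.Gamma (1/2 + 1/2) / (Real.Gamma (1/2) * Real.Gamma (1/2)))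
        * x ^ ((1:ℝ)/2 - 1) * (1 - x) ^ ((1:ℝ)/2 - 1) * h x
      = (1/(2 * Real.pi)) * (x ^ ((3:ℝ)/2) * (1 - x) ^ (-(1:ℝ)/2)) := by
    intro x hx
    obtain ⟨hx0, hx1⟩ := hx
    rw [hdef x, max_eq_left hx0.le, min_eq_left hx1.le]
    have hg : Real.Gamma (1/2 + 1/2) = 1 := by norm_num [Real.Gamma_one]
    have hgh : Real.Gamma (1/2) * Real.Gamma (1/2) = Real.pi := by
      rw [Real.Gamma_one_half_eq]; exact Real.mul_self_sqrt Real.pi_pos.le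
    have he : ((1:ℝ)/2 - 1) = (-(1:ℝ)/2) := by norm_num
    rw [hg, hgh, he]
    have hx32 : x ^ (-(1:ℝ)/2) * x ^ (2:ℕ) = x ^ ((3:ℝ)/2) := by
      rw [← Real.rpow_natCast x 2, ← Real.rpow_add hx0]
      norm_num
    calc 1 / Real.pi * x ^ (-(1:ℝ)/2) * (1-x) ^ (-(1:ℝ)/2) * (x ^ 2 / 2)
        = (1/(2 * Real.pi)) * ((x ^ (-(1:ℝ)/2) * x ^ (2:ℕ)) * (1-x) ^ (-(1:ℝ)/2)) := by
          ring
      _ = (1/(2 * Real.pi)) * (x ^ ((3:ℝ)/2) * (1-x) ^ (-(1:ℝ)/2)) := by rw [hx32]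
  rw [betaExp, setIntegral_congr_fun measurableSet_Ioo hcongr, integral_const_mul]
  have : ∫ x in Set.Ioo (0:ℝ) 1, x ^ ((3:ℝ)/2) * (1 - x) ^ (-(1:ℝ)/2)
      = 3 * Real.pi / 8 := by
    rw [← integral_Ioc_eq_integral_Ioo, ← intervalIntegral.integral_of_le zero_le_one]
    exact I_eq
  rw [this]
  have hpi := Real.pi_ne_zero
  field_simp
  ring

/- ### Moments -/

lemma moment1 (n : ℕ) (hn : 1 ≤ n) :
    ∑ k ∈ Finset.range (n + 1), arcPmf n k * ((k : ℝ) / n) = 1 / 2 := by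
  have hne : (n:ℝ) ≠ 0 := by positivity
  have : ∑ k ∈ Finset.range (n + 1), arcPmf n k * ((k : ℝ) / n) = S1 n / n := by
    rw [S1, Finset.sum_div]
    exact Finset.sum_congr rfl fun k hk => by rw [arcPmf]; ring
  rw [this, S1_eq]
  field_simp

lemma moment2 (n : ℕ) (hn : 1 ≤ n) :
    ∑ k ∈ Finset.range (n + 1), arcPmf n k * ((k : ℝ) / n) ^ 2
      = 3 / 8 + 1 / (8 * (n : ℝ)) := by
  have hne : (n:ℝ) ≠ 0 := by positivity
  have : ∑ k ∈ Finset.range (n + 1), arcPmf n k * ((k : ℝ) / n) ^ 2 = S2 n / n^2 := by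
    rw [S2, Finset.sum_div]
    refine Finset.sum_congr rfl fun k hk => ?_
    rw [arcPmf, div_pow]
    ring
  rw [this, S2_eq]
  field_simp

/-- With `K` distributed as `L_{2n}/2` and `W = K/n`:
`E[W] = 1/2`, `E[W²] = 3/8 + 1/(8n)`; for the `1`-Lipschitz function
`h(w) = w²/2` on `[0,1]` (extended by clamping to a `1`-Lipschitz function
on ℝ) and `Z` Arcsine distributed, `E h(W) - E h(Z) = 1/(16n)`; hence
`d_W(W, Z) ≥ 1/(16n)` (there is a `1`-Lipschitz test function attaining at
least this value), so the `O(1/n)` rate cannot be improved. -/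
theorem stmt_19 (n : ℕ) (hn : 1 ≤ n)
    (h : ℝ → ℝ) (hdef : ∀ x : ℝ, h x = (min (max x 0) 1) ^ 2 / 2) :
    (∑ k ∈ Finset.range (n + 1), arcPmf n k * ((k : ℝ) / n) = 1 / 2) ∧
    (∑ k ∈ Finset.range (n + 1), arcPmf n k * ((k : ℝ) / n) ^ 2
        = 3 / 8 + 1 / (8 * (n : ℝ))) ∧
    LipschitzWith 1 h ∧
    (∑ k ∈ Finset.range (n + 1), arcPmf n k * h ((k : ℝ) / n)
        - betaExp (1 / 2) (1 / 2) h = 1 / (16 * (n : ℝ))) ∧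
    (∃ h₀ : ℝ → ℝ, LipschitzWith 1 h₀ ∧
      1 / (16 * (n : ℝ))
        ≤ |∑ k ∈ Finset.range (n + 1), arcPmf n k * h₀ ((k : ℝ) / n)
            - betaExp (1 / 2) (1 / 2) h₀|) := by
  have hne : (n:ℝ) ≠ 0 := by positivity
  have hnpos : (0:ℝ) < n := by positivity
  have hsum : ∑ k ∈ Finset.range (n + 1), arcPmf n k * h ((k : ℝ) / n)
      - betaExp (1 / 2) (1 / 2) h = 1 / (16 * (n : ℝ)) := by
    have hval : ∀ k ∈ Finset.range (n+1),
        arcPmf n k * h ((k : ℝ) / n) = arcPmf n k * (((k:ℝ)/n) ^ 2) / 2 := by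
      intro k hk
      have hk' : k ≤ n := by simpa [Nat.lt_succ_iff] using hk
      have h0 : (0:ℝ) ≤ (k:ℝ)/n := by positivity
      have h1 : (k:ℝ)/n ≤ 1 := by
        rw [div_le_one hnpos]; exact_mod_cast hk'
      rw [hdef, max_eq_left h0, min_eq_left h1]
      ring
    rw [Finset.sum_congr rfl hval, betaExp_eq h hdef]
    have : ∑ k ∈ Finset.range (n + 1), arcPmf n k * ((k:ℝ)/n) ^ 2 / 2
        = (∑ k ∈ Finset.range (n + 1), arcPmf n k * ((k:ℝ)/n) ^ 2) / 2 := by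
      rw [Finset.sum_div]
    rw [this, moment2 n hn]
    field_simp
    ring
  refine ⟨moment1 n hn, moment2 n hn, lip_h_s19 h hdef, hsum, h, lip_h_s19 h hdef, ?_⟩
  rw [hsum, abs_of_pos (by positivity)]
end
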